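/- The left principal connection transforms equivariantly under the structure group: let A be a full-rank MPS parameter, B a tangent parameter, and G = (G(0),…,G(N)) a gauge transformation with G(0) = G(N) = 1. Then for every n = 1,…,N−1, ω^{(L)}_{A^{[G]}}(B^{[G]})(n) = G(n)^{-1}·ω^{(L)}_A(B)(n)·G(n), where (A^{[G]})^s(n) = G(n−1)^{-1}A^s(n)G(n) and (B^{[G]})^s(n) = G(n−1)^{-1}B^s(n)G(n). -/
import Mathlib


open Matrix
open scoped ComplexOrder

noncomputable section

namespace MPS

variable {N : ℕ} {q : Fin N → ℕ} {D : ℕ → ℕ}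

/-- The left virtual density matrices: `l 0 = 1`,
`l (n+1) = Σ_s A^s(n)† l(n) A^s(n)`. -/
def lMat (A : (n : Fin N) → Fin (q n) → Matrix (Fin (D n.val)) (Fin (D (n.val + 1))) ℂ) :
    (k : ℕ) → k ≤ N → Matrix (Fin (D k)) (Fin (D k)) ℂ
  | 0, _ => 1
  | k + 1, h => ∑ s : Fin (q ⟨k, h⟩),
      (A ⟨k, h⟩ s)ᴴ * lMat A k (Nat.le_of_succ_le h) * A ⟨k, h⟩ s

/-- Auxiliary downward recursion for the right virtual density matrices:
`rAux j = r (N - j)`. -/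
def rAux (A : (n : Fin N) → Fin (q n) → Matrix (Fin (D n.val)) (Fin (D (n.val + 1))) ℂ) :
    (j : ℕ) → j ≤ N → Matrix (Fin (D (N - j))) (Fin (D (N - j))) ℂ
  | 0, _ => 1
  | j + 1, h => ∑ s : Fin (q ⟨N - (j + 1), by omega⟩),
      A ⟨N - (j + 1), by omega⟩ s *
        ((rAux A j (Nat.le_of_succ_le h)).submatrix
          (Fin.cast (congrArg D (by omega : N - (j + 1) + 1 = N - j)))
          (Fin.cast (congrArg D (by omega : N - (j + 1) + 1 = N - j)))) *
      (A ⟨N - (j + 1), by omega⟩ s)ᴴ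

/-- The right virtual density matrices: `r N = 1`,
`r (n-1) = Σ_s A^s(n) r(n) A^s(n)†`. -/
def rMat (A : (n : Fin N) → Fin (q n) → Matrix (Fin (D n.val)) (Fin (D (n.val + 1))) ℂ)
    (n : ℕ) (h : n ≤ N) : Matrix (Fin (D n)) (Fin (D n)) ℂ :=
  (rAux A (N - n) (Nat.sub_le N n)).submatrix
    (Fin.cast (congrArg D (by omega : n = N - (N - n))))
    (Fin.cast (congrArg D (by omega : n = N - (N - n))))

/-- An MPS parameter is full rank if all its virtual density matrices are positive
definite. -/
def FullRank (A : (n : Fin N) → Fin (q n) → Matrix (Fin (D n.val)) (Fin (D (n.val + 1))) ℂ) :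
    Prop :=
  ∀ (k : ℕ) (h : k ≤ N), (lMat A k h).PosDef ∧ (rMat A k h).PosDef

end MPS

namespace MPS

variable {N : ℕ} {q : Fin N → ℕ} {D : ℕ → ℕ}

/-- The recursively defined family `y`: `y 0 = 0`,
`y (n+1) = Σ_s A^s(n)† y(n) A^s(n) + Σ_s A^s(n)† l(n) B^s(n)`. -/
def yMat (A B : (n : Fin N) → Fin (q n) → Matrix (Fin (D n.val)) (Fin (D (n.val + 1))) ℂ) :
    (k : ℕ) → k ≤ N → Matrix (Fin (D k)) (Fin (D k)) ℂ
  | 0, _ => 0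
  | k + 1, h =>
      (∑ s : Fin (q ⟨k, h⟩),
        (A ⟨k, h⟩ s)ᴴ * yMat A B k (Nat.le_of_succ_le h) * A ⟨k, h⟩ s) +
      (∑ s : Fin (q ⟨k, h⟩),
        (A ⟨k, h⟩ s)ᴴ * lMat A k (Nat.le_of_succ_le h) * B ⟨k, h⟩ s)

/-- The left principal connection `ω^{(L)}_A(B)(n) = l(n)⁻¹ · y(n)`. -/
def omegaL (A B : (n : Fin N) → Fin (q n) → Matrix (Fin (D n.val)) (Fin (D (n.val + 1))) ℂ)
    (n : ℕ) (h : n ≤ N) : Matrix (Fin (D n)) (Fin (D n)) ℂ :=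
  (lMat A n h)⁻¹ * yMat A B n h

end MPS

/-- **Equivariance of the left principal connection under the structure group:** for a
full-rank MPS parameter `A`, a tangent parameter `B` and a gauge transformation `G` with
`G 0 = 1` and `G N = 1`, one has
`ω^{(L)}_{A^{[G]}}(B^{[G]})(n) = G(n)⁻¹ · ω^{(L)}_A(B)(n) · G(n)` for `n = 1, …, N−1`. -/
theorem mps_connection_equivariant (N : ℕ) (q : Fin N → ℕ) (D : ℕ → ℕ)
    (h0 : D 0 = 1) (hN : D N = 1)
    (A B : (n : Fin N) → Fin (q n) → Matrix (Fin (D n.val)) (Fin (D (n.val + 1))) ℂ)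
    (hA : MPS.FullRank A)
    (G : (n : ℕ) → Matrix (Fin (D n)) (Fin (D n)) ℂ)
    (hG : ∀ n, n ≤ N → IsUnit (G n)) (hG0 : G 0 = 1) (hGN : G N = 1) :
    ∀ (n : ℕ) (h1 : 1 ≤ n) (h2 : n ≤ N - 1),
      MPS.omegaL (fun m s => (G m.val)⁻¹ * A m s * G (m.val + 1))
          (fun m s => (G m.val)⁻¹ * B m s * G (m.val + 1)) n (by omega)
        = (G n)⁻¹ * MPS.omegaL A B n (by omega) * G n := by
  intro n h1 h2
  have hn : n ≤ N := by omega
  set A' : (n : Fin N) → Fin (q n) → Matrix (Fin (D n.val)) (Fin (D (n.val + 1))) ℂ :=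
    fun m s => (G m.val)⁻¹ * A m s * G (m.val + 1) with hA'
  set B' : (n : Fin N) → Fin (q n) → Matrix (Fin (D n.val)) (Fin (D (n.val + 1))) ℂ :=
    fun m s => (G m.val)⁻¹ * B m s * G (m.val + 1) with hB'
  have hGdet : ∀ k, k ≤ N → IsUnit (G k).det := fun k hk =>
    (Matrix.isUnit_iff_isUnit_det _).mp (hG k hk)
  have cancel : ∀ (k : ℕ), k ≤ N → ∀ {m : Type} [Fintype m] (X : Matrix (Fin (D k)) m ℂ),
      G k * ((G k)⁻¹ * X) = X := by
    intro k hk m _ X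
    rw [← Matrix.mul_assoc, Matrix.mul_nonsing_inv _ (hGdet k hk), Matrix.one_mul]
  have cancelH : ∀ (k : ℕ), k ≤ N → ∀ {m : Type} [Fintype m] (X : Matrix (Fin (D k)) m ℂ),
      ((G k)⁻¹)ᴴ * ((G k)ᴴ * X) = X := by
    intro k hk m _ X
    rw [← Matrix.mul_assoc, ← Matrix.conjTranspose_mul, Matrix.mul_nonsing_inv _ (hGdet k hk),
      Matrix.conjTranspose_one, Matrix.one_mul]
  have hL : ∀ (k : ℕ) (hk : k ≤ N),
      MPS.lMat A' k hk = (G k)ᴴ * MPS.lMat A k hk * G k := by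
    intro k
    induction k with
    | zero => intro hk; simp [MPS.lMat, hG0]
    | succ k ih =>
      intro hk
      have hk' : k ≤ N := Nat.le_of_succ_le hk
      rw [MPS.lMat, MPS.lMat, ih hk', Matrix.mul_sum, Matrix.sum_mul]
      refine Finset.sum_congr rfl fun s _ => ?_
      show ((G k)⁻¹ * A ⟨k, hk⟩ s * G (k + 1))ᴴ * ((G k)ᴴ * MPS.lMat A k hk' * G k) *
          ((G k)⁻¹ * A ⟨k, hk⟩ s * G (k + 1)) =
        (G (k + 1))ᴴ * ((A ⟨k, hk⟩ s)ᴴ * MPS.lMat A k hk' * A ⟨k, hk⟩ s) * G (k + 1)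
      simp only [Matrix.conjTranspose_mul, Matrix.mul_assoc, cancel k hk', cancelH k hk']
  have hY : ∀ (k : ℕ) (hk : k ≤ N),
      MPS.yMat A' B' k hk = (G k)ᴴ * MPS.yMat A B k hk * G k := by
    intro k
    induction k with
    | zero => intro hk; simp [MPS.yMat]
    | succ k ih =>
      intro hk
      have hk' : k ≤ N := Nat.le_of_succ_le hk
      rw [MPS.yMat, MPS.yMat, ih hk', hL k hk', Matrix.mul_add, Matrix.add_mul,
        Matrix.mul_sum, Matrix.sum_mul, Matrix.mul_sum, Matrix.sum_mul]
      congr 1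
      · refine Finset.sum_congr rfl fun s _ => ?_
        show ((G k)⁻¹ * A ⟨k, hk⟩ s * G (k + 1))ᴴ * ((G k)ᴴ * MPS.yMat A B k hk' * G k) *
            ((G k)⁻¹ * A ⟨k, hk⟩ s * G (k + 1)) =
          (G (k + 1))ᴴ * ((A ⟨k, hk⟩ s)ᴴ * MPS.yMat A B k hk' * A ⟨k, hk⟩ s) * G (k + 1)
        simp only [Matrix.conjTranspose_mul, Matrix.mul_assoc, cancel k hk', cancelH k hk']
      · refine Finset.sum_congr rfl fun s _ => ?_
        show ((G k)⁻¹ * A ⟨k, hk⟩ s * G (k + 1))ᴴ * ((G k)ᴴ * MPS.lMat A k hk' * G k) *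
            ((G k)⁻¹ * B ⟨k, hk⟩ s * G (k + 1)) =
          (G (k + 1))ᴴ * ((A ⟨k, hk⟩ s)ᴴ * MPS.lMat A k hk' * B ⟨k, hk⟩ s) * G (k + 1)
        simp only [Matrix.conjTranspose_mul, Matrix.mul_assoc, cancel k hk', cancelH k hk']
  have cancelHinv : ∀ {m : Type} [Fintype m] (X : Matrix (Fin (D n)) m ℂ),
      ((G n)ᴴ)⁻¹ * ((G n)ᴴ * X) = X := by
    intro m _ X
    rw [← Matrix.mul_assoc, Matrix.nonsing_inv_mul, Matrix.one_mul]
    rw [Matrix.det_conjTranspose]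
    exact (hGdet n hn).star
  rw [MPS.omegaL, MPS.omegaL, hL n hn, hY n hn, Matrix.mul_inv_rev, Matrix.mul_inv_rev]
  simp only [Matrix.mul_assoc, cancelHinv]
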